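/- Let V : [0,∞) → ℝ be continuous, λ < 0, γ ∈ ℝ, and let φ : [0,∞) → ℝ be twice continuously differentiable satisfying −φ'' + Vφ = λφ on [0,∞). Set Φ(x) = 1 + γ∫₀ˣ φ(t)² dt and assume Φ(x) > 0 for all x ≥ 0, and let G(x) = γφ(x)²/Φ(x). Then for all x ≥ 0, G'(x)(G'(x) − V(x)) equals the derivative at x of the function x ↦ |λ|G(x) − (γφ'(x)²Φ(x)² − γ²φ'(x)φ(x)³Φ(x) + (1/3)γ³φ(x)⁶)/Φ(x)³. -/

import Mathlib

open MeasureTheory Set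

/-- One-sided derivative on `[0, ∞)`. -/
noncomputable def D (f : ℝ → ℝ) : ℝ → ℝ := derivWithin f (Set.Ici 0)

/-- Explicit antiderivative of `G'(G' - V)` (Remark 3 of the paper), valid even
when the eigenfunction `φ` has zeros. -/
theorem antiderivative_identity
    (V φ : ℝ → ℝ) (lam γ : ℝ) (hlam : lam < 0)
    (hV : ContinuousOn V (Set.Ici 0))
    (hφ : ContDiffOn ℝ 2 φ (Set.Ici 0))
    (hφode : ∀ x ∈ Set.Ici (0:ℝ), -(D (D φ) x) + V x * φ x = lam * φ x)
    (Φ : ℝ → ℝ) (hΦ : ∀ x, Φ x = 1 + γ * ∫ t in (0:ℝ)..x, (φ t) ^ 2)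
    (hΦpos : ∀ x ∈ Set.Ici (0:ℝ), 0 < Φ x)
    (G : ℝ → ℝ) (hG : ∀ x, G x = γ * (φ x) ^ 2 / Φ x) :
    ∀ x ∈ Set.Ici (0:ℝ),
      D G x * (D G x - V x) =
        D (fun y => |lam| * G y -
          (γ * (D φ y) ^ 2 * (Φ y) ^ 2 - γ ^ 2 * D φ y * (φ y) ^ 3 * Φ y
            + 1/3 * γ ^ 3 * (φ y) ^ 6) / (Φ y) ^ 3) x := by
  intro x hx
  simp only [D] at hφode ⊢
  have hU : UniqueDiffOn ℝ (Set.Ici (0:ℝ)) := uniqueDiffOn_Ici 0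
  have hΦne : Φ x ≠ 0 := ne_of_gt (hΦpos x hx)
  -- derivative of φ
  have hφdiff : DifferentiableOn ℝ φ (Set.Ici 0) := hφ.differentiableOn (by norm_num)
  have hφd : HasDerivWithinAt φ (derivWithin φ (Set.Ici 0) x) (Set.Ici 0) x :=
    (hφdiff x hx).hasDerivWithinAt
  -- derivative of φ'
  have hφ'cd : ContDiffOn ℝ 1 (derivWithin φ (Set.Ici 0)) (Set.Ici 0) :=
    hφ.derivWithin hU (by norm_num)
  have hφ'd : HasDerivWithinAt (derivWithin φ (Set.Ici 0))
      (derivWithin (derivWithin φ (Set.Ici 0)) (Set.Ici 0) x) (Set.Ici 0) x :=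
    ((hφ'cd.differentiableOn (by norm_num)) x hx).hasDerivWithinAt
  -- derivative of Φ
  have hsq : ContinuousOn (fun t => (φ t) ^ 2) (Set.Ici 0) := (hφ.continuousOn).pow 2
  have hΦfun : Φ = fun y => 1 + γ * ∫ t in (0:ℝ)..y, (φ t) ^ 2 := funext hΦ
  have hint : IntervalIntegrable (fun t => (φ t) ^ 2) volume 0 x := by
    apply ContinuousOn.intervalIntegrable
    apply hsq.mono
    rw [Set.uIcc_of_le hx]
    exact fun t ht => ht.1
  have hI : HasDerivWithinAt (fun y => ∫ t in (0:ℝ)..y, (φ t) ^ 2) ((φ x) ^ 2)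
      (Set.Ici 0) x := by
    rcases eq_or_lt_of_le (show (0:ℝ) ≤ x from hx) with h0 | h0
    · subst h0
      have hmeas : StronglyMeasurableAtFilter (fun t => (φ t) ^ 2)
          (nhdsWithin (0:ℝ) (Set.Ioi (0:ℝ))) volume :=
        ⟨Set.Ici 0, Filter.mem_of_superset self_mem_nhdsWithin Ioi_subset_Ici_self,
          hsq.aestronglyMeasurable measurableSet_Ici⟩
      exact intervalIntegral.integral_hasDerivWithinAt_right hint hmeas
        ((hsq 0 hx).mono Ioi_subset_Ici_self)
    · have hnhds : Set.Ici (0:ℝ) ∈ nhds x :=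
        Filter.mem_of_superset (Ioi_mem_nhds h0) Ioi_subset_Ici_self
      have hmeas : StronglyMeasurableAtFilter (fun t => (φ t) ^ 2) (nhds x) volume :=
        ⟨Set.Ici 0, hnhds, hsq.aestronglyMeasurable measurableSet_Ici⟩
      exact (intervalIntegral.integral_hasDerivAt_right hint hmeas
        (hsq.continuousAt hnhds)).hasDerivWithinAt
  have hΦd : HasDerivWithinAt Φ (γ * (φ x) ^ 2) (Set.Ici 0) x := by
    rw [hΦfun]
    exact (hI.const_mul γ).const_add 1
  -- derivative of G
  have hGfun : G = fun y => γ * (φ y) ^ 2 / Φ y := funext hG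
  have hGd' := (((hφd.pow 2).const_mul γ).div hΦd hΦne)
  have hGd : HasDerivWithinAt G
      ((γ * ((2:ℕ) * φ x ^ (2-1) * derivWithin φ (Set.Ici 0) x) * Φ x -
        γ * φ x ^ 2 * (γ * φ x ^ 2)) / Φ x ^ 2) (Set.Ici 0) x := by
    rw [hGfun]; exact hGd'
  have hDG : derivWithin G (Set.Ici 0) x =
      (γ * ((2:ℕ) * φ x ^ (2-1) * derivWithin φ (Set.Ici 0) x) * Φ x -
        γ * φ x ^ 2 * (γ * φ x ^ 2)) / Φ x ^ 2 :=
    hGd.derivWithin (hU x hx)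
  -- derivative of the big function
  have hnum := ((((hφ'd.pow 2).const_mul γ).mul (hΦd.pow 2)).sub
      ((((hφ'd.const_mul (γ ^ 2)).mul (hφd.pow 3))).mul hΦd)).add
      ((hφd.pow 6).const_mul (1/3 * γ ^ 3))
  have hΦ3ne : Φ x ^ 3 ≠ 0 := pow_ne_zero 3 hΦne
  have hF := (hGd.const_mul |lam|).sub (hnum.div (hΦd.pow 3) hΦ3ne)
  have hDF := hF.derivWithin (hU x hx)
  rw [hDG]; erw [hDF]; simp only [Pi.pow_apply, Pi.mul_apply, Pi.sub_apply, Pi.add_apply]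
  have hr : derivWithin (derivWithin φ (Set.Ici 0)) (Set.Ici 0) x = (V x - lam) * φ x := by
    have := hφode x hx; linarith
  rw [hr, abs_of_neg hlam]
  field_simp
  ring
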